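/- For every n×n complex matrix V, |Per(V)| ≤ ‖V‖^n. -/

import Mathlib

/-- The permanent of an `n×n` complex matrix: `Per(A) = ∑_{σ ∈ S_n} ∏_i A i (σ i)`. -/
noncomputable def perm {n : ℕ} (A : Matrix (Fin n) (Fin n) ℂ) : ℂ :=
  ∑ σ : Equiv.Perm (Fin n), ∏ i, A i (σ i)

/-- The ℓ²→ℓ² operator norm of a complex square matrix (its largest singular value). -/
noncomputable def opNorm {n : ℕ} (A : Matrix (Fin n) (Fin n) ℂ) : ℝ :=
  ‖Matrix.toEuclideanCLM (𝕜 := ℂ) A‖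

open Finset

/-- The sign `±1` attached to a boolean. -/
noncomputable def sg (b : Bool) : ℂ := if b then 1 else -1

lemma abs_sg (b : Bool) : ‖sg b‖ = 1 := by cases b <;> simp [sg]

lemma sum_sg_pow (k : ℕ) : ∑ b : Bool, sg b ^ k = if Even k then 2 else 0 := by
  rcases Nat.even_or_odd k with h | h
  · simp [sg, Fintype.sum_bool, h, h.neg_one_pow]
  · simp [sg, Fintype.sum_bool, h.neg_one_pow, Nat.not_even_iff_odd.mpr h]

/-- Glynn-type formula for the permanent. -/
lemma glynn {n : ℕ} (A : Matrix (Fin n) (Fin n) ℂ) :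
    (2 : ℂ) ^ n * perm A =
      ∑ δ : Fin n → Bool, (∏ i, sg (δ i)) * ∏ i, ∑ j, A i j * sg (δ j) := by
  classical
  -- abbreviation for fiber cardinalities
  set c : (Fin n → Fin n) → Fin n → ℕ :=
    fun f j => (univ.filter fun i => f i = j).card with hc
  have key : ∀ f : Fin n → Fin n,
      (∑ δ : Fin n → Bool, (∏ i, sg (δ i)) * ∏ i, sg (δ (f i))) =
        if Function.Bijective f then (2 : ℂ) ^ n else 0 := by
    intro f
    have step1 : ∀ δ : Fin n → Bool,
        (∏ i, sg (δ i)) * ∏ i, sg (δ (f i)) = ∏ j, sg (δ j) ^ (c f j + 1) := by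
      intro δ
      have h1 : ∏ i, sg (δ (f i)) = ∏ j, sg (δ j) ^ c f j := by
        rw [← Finset.prod_fiberwise' univ f (fun j => sg (δ j))]
        exact Finset.prod_congr rfl fun j _ => Finset.prod_const _
      rw [h1, ← Finset.prod_mul_distrib]
      exact Finset.prod_congr rfl fun j _ => by rw [pow_succ, mul_comm]
    have step2 : (∑ δ : Fin n → Bool, (∏ i, sg (δ i)) * ∏ i, sg (δ (f i))) =
        ∏ j, ∑ b : Bool, sg b ^ (c f j + 1) := by
      rw [Fintype.prod_sum (fun j b => sg b ^ (c f j + 1))]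
      exact Finset.sum_congr rfl fun δ _ => step1 δ
    rw [step2]
    have hsum : ∑ j, c f j = n := by
      have := Finset.card_eq_sum_card_fiberwise
        (f := f) (s := univ) (t := univ) (fun x _ => mem_univ _)
      simpa [hc] using this.symm
    by_cases hf : Function.Bijective f
    · have hone : ∀ j, c f j = 1 := by
        intro j
        obtain ⟨i, hi⟩ := hf.surjective j
        rw [hc]
        rw [Finset.card_eq_one]
        refine ⟨i, ?_⟩
        ext a
        simp only [Finset.mem_filter, Finset.mem_univ, true_and, Finset.mem_singleton]
        constructor
        · intro ha; exact hf.injective (by rw [ha, hi])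
        · intro ha; rw [ha, hi]
      simp only [hf, if_true]
      calc ∏ j, ∑ b : Bool, sg b ^ (c f j + 1)
          = ∏ _j : Fin n, (2 : ℂ) := by
            refine Finset.prod_congr rfl fun j _ => ?_
            rw [sum_sg_pow, hone j, if_pos (by norm_num)]
        _ = (2 : ℂ) ^ n := by simp
    · -- not bijective: some fiber has even cardinality
      have : ∃ j, Even (c f j) := by
        by_contra hodd
        push_neg at hodd
        have hodd' : ∀ j, Odd (c f j) := fun j => Nat.not_even_iff_odd.mp (hodd j)
        have hone : ∀ j, c f j = 1 := by
          have hle : ∀ j ∈ (univ : Finset (Fin n)), 1 ≤ c f j := fun j _ =>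
            (hodd' j).pos
          have hsum' : ∑ j : Fin n, (1 : ℕ) = ∑ j, c f j := by
            simp [hsum]
          intro j
          exact ((Finset.sum_eq_sum_iff_of_le hle).mp hsum' j (mem_univ j)).symm
        have hinj : Function.Injective f := by
          intro a b hab
          have ha : a ∈ univ.filter fun i => f i = f b := by simp [hab]
          have hb : b ∈ univ.filter fun i => f i = f b := by simp
          have hcard : (univ.filter fun i => f i = f b).card ≤ 1 := le_of_eq (hone (f b))
          exact Finset.card_le_one.mp hcard a ha b hb
        exact hf (Finite.injective_iff_bijective.mp hinj)
      obtain ⟨j, hj⟩ := this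
      rw [if_neg hf]
      refine Finset.prod_eq_zero (mem_univ j) ?_
      rw [sum_sg_pow, if_neg]
      simp [Nat.even_add_one, hj]
  -- now expand the right-hand side
  have expand : ∀ δ : Fin n → Bool,
      (∏ i, ∑ j, A i j * sg (δ j)) = ∑ f : Fin n → Fin n, ∏ i, A i (f i) * sg (δ (f i)) :=
    fun δ => Fintype.prod_sum (fun i j => A i j * sg (δ j))
  symm
  calc (∑ δ : Fin n → Bool, (∏ i, sg (δ i)) * ∏ i, ∑ j, A i j * sg (δ j))
      = ∑ δ : Fin n → Bool, ∑ f : Fin n → Fin n,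
          (∏ i, A i (f i)) * ((∏ i, sg (δ i)) * ∏ i, sg (δ (f i))) := by
        refine Finset.sum_congr rfl fun δ _ => ?_
        rw [expand δ, Finset.mul_sum]
        refine Finset.sum_congr rfl fun f _ => ?_
        rw [Finset.prod_mul_distrib]; ring
    _ = ∑ f : Fin n → Fin n,
          (∏ i, A i (f i)) * ∑ δ : Fin n → Bool, (∏ i, sg (δ i)) * ∏ i, sg (δ (f i)) := by
        rw [Finset.sum_comm]
        exact Finset.sum_congr rfl fun f _ => (Finset.mul_sum _ _ _).symm
    _ = ∑ f : Fin n → Fin n,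
          (∏ i, A i (f i)) * (if Function.Bijective f then (2 : ℂ) ^ n else 0) := by
        exact Finset.sum_congr rfl fun f _ => by rw [key f]
    _ = ∑ f ∈ univ.filter (fun f : Fin n → Fin n => Function.Bijective f),
          (∏ i, A i (f i)) * (2 : ℂ) ^ n := by
        rw [Finset.sum_filter]
        exact Finset.sum_congr rfl fun f _ => by split <;> simp
    _ = ∑ σ : Equiv.Perm (Fin n), (∏ i, A i (σ i)) * (2 : ℂ) ^ n := by
        refine (Finset.sum_bij' (fun (σ : Equiv.Perm (Fin n)) _ => (σ : Fin n → Fin n))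
          (fun f hf => Equiv.ofBijective f (by simpa using hf)) ?_ ?_ ?_ ?_ ?_).symm
        · intro σ _; simp only [Finset.mem_filter, Finset.mem_univ, true_and]; exact σ.bijective
        · intro f hf; exact mem_univ _
        · intro σ _; ext i; simp
        · intro f hf; rfl
        · intro σ _; rfl
    _ = (2 : ℂ) ^ n * perm A := by
        rw [perm, Finset.mul_sum]
        exact Finset.sum_congr rfl fun σ _ => (mul_comm _ _).symm

/-- Key analytic estimate: for any vector of unimodular entries, the product of the
absolute values of the rows of `A` applied to it is at most `opNorm A ^ n`. -/
lemma row_prod_le {n : ℕ} (hn : 0 < n) (A : Matrix (Fin n) (Fin n) ℂ) (v : Fin n → ℂ)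
    (hv : ∀ j, ‖v j‖ = 1) :
    ∏ i, ‖∑ j, A i j * v j‖ ≤ opNorm A ^ n := by
  classical
  set x : EuclideanSpace ℂ (Fin n) := (WithLp.equiv 2 _).symm v with hxdef
  set y : EuclideanSpace ℂ (Fin n) := Matrix.toEuclideanCLM (𝕜 := ℂ) A x with hydef
  have hyi : ∀ i, y i = ∑ j, A i j * v j := by
    intro i
    have h := Matrix.toEuclideanCLM_toLp (𝕜 := ℂ) A v
    rw [hydef, hxdef]
    simp [h, Matrix.toLin'_apply, Matrix.mulVec, dotProduct]
  have hxnorm : ‖x‖ = Real.sqrt n := by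
    rw [EuclideanSpace.norm_eq]
    have : ∀ i, ‖x i‖ = 1 := fun i => by
      simpa [hxdef] using hv i
    simp [this]
  have hynorm : ‖y‖ ≤ opNorm A * Real.sqrt n := by
    calc ‖y‖ ≤ ‖Matrix.toEuclideanCLM (𝕜 := ℂ) A‖ * ‖x‖ :=
          (Matrix.toEuclideanCLM (𝕜 := ℂ) A).le_opNorm x
      _ = opNorm A * Real.sqrt n := by rw [hxnorm]; rfl
  have hop : (0 : ℝ) ≤ opNorm A := norm_nonneg _
  have hsq : ∑ i, ‖y i‖ ^ 2 ≤ opNorm A ^ 2 * n := by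
    have h1 : ‖y‖ ^ 2 = ∑ i, ‖y i‖ ^ 2 := by
      rw [EuclideanSpace.norm_eq, Real.sq_sqrt (by positivity)]
    have h2 : ‖y‖ ^ 2 ≤ (opNorm A * Real.sqrt n) ^ 2 :=
      pow_le_pow_left₀ (norm_nonneg _) hynorm 2
    rw [h1] at h2
    calc ∑ i, ‖y i‖ ^ 2 ≤ (opNorm A * Real.sqrt n) ^ 2 := h2
      _ = opNorm A ^ 2 * n := by
          rw [mul_pow, Real.sq_sqrt (Nat.cast_nonneg n)]
  -- AM-GM
  have amgm : ∏ i, ‖y i‖ ^ 2 ≤ (opNorm A ^ 2) ^ n := by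
    set z : Fin n → ℝ := fun i => ‖y i‖ ^ 2 with hz
    have hznn : ∀ i ∈ (univ : Finset (Fin n)), (0 : ℝ) ≤ z i := fun i _ => by positivity
    have hw : ∀ i ∈ (univ : Finset (Fin n)), (0 : ℝ) ≤ (n : ℝ)⁻¹ := fun _ _ => by positivity
    have hw' : ∑ _i : Fin n, (n : ℝ)⁻¹ = 1 := by
      rw [Finset.sum_const]
      simp
      field_simp
    have hgm := Real.geom_mean_le_arith_mean_weighted univ (fun _ => (n : ℝ)⁻¹) z hw hw' hznn
    have hprod : ∏ i, z i ^ ((n : ℝ)⁻¹) = (∏ i, z i) ^ ((n : ℝ)⁻¹) := by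
      rw [← Real.finset_prod_rpow _ _ hznn]
    have hsum' : ∑ i, (n : ℝ)⁻¹ * z i ≤ opNorm A ^ 2 := by
      rw [← Finset.mul_sum]
      rw [inv_mul_le_iff₀ (by positivity)]
      calc ∑ i, z i ≤ opNorm A ^ 2 * n := hsq
        _ = (n : ℝ) * opNorm A ^ 2 := by ring
    have hfinal : (∏ i, z i) ^ ((n : ℝ)⁻¹) ≤ opNorm A ^ 2 := by
      rw [← hprod]; exact le_trans hgm hsum'
    have hpn : (0 : ℝ) ≤ ∏ i, z i := Finset.prod_nonneg hznn
    calc ∏ i, z i = (∏ i, z i) ^ ((1 : ℝ)) := (Real.rpow_one _).symm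
      _ ≤ (opNorm A ^ 2) ^ ((n : ℝ)) := by
          rw [← inv_mul_cancel₀ (by positivity : (n : ℝ) ≠ 0), Real.rpow_mul hpn]
          exact Real.rpow_le_rpow (Real.rpow_nonneg hpn _) hfinal (by positivity)
      _ = (opNorm A ^ 2) ^ n := by
          rw [Real.rpow_natCast]
  have habs : ∏ i, ‖∑ j, A i j * v j‖ = ∏ i, ‖y i‖ := by
    exact Finset.prod_congr rfl fun i _ => by rw [hyi i]
  rw [habs]
  have h1 : (∏ i, ‖y i‖) ^ 2 ≤ (opNorm A ^ n) ^ 2 := by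
    calc (∏ i, ‖y i‖) ^ 2 = ∏ i, ‖y i‖ ^ 2 := by
          rw [← Finset.prod_pow]
      _ ≤ (opNorm A ^ 2) ^ n := amgm
      _ = (opNorm A ^ n) ^ 2 := by ring
  exact (pow_le_pow_iff_left₀ (Finset.prod_nonneg fun i _ => by positivity)
    (by positivity) (by norm_num)).mp h1

/-- `|Per(V)| ≤ ‖V‖^n` for every `n×n` complex matrix `V`. -/
theorem abs_perm_le_opNorm_pow (n : ℕ) (V : Matrix (Fin n) (Fin n) ℂ) :
    ‖perm V‖ ≤ opNorm V ^ n := by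
  rcases Nat.eq_zero_or_pos n with rfl | hn
  · simp [perm]
  · have hg := glynn V
    have habs : (2 : ℝ) ^ n * ‖perm V‖ ≤ 2 ^ n * opNorm V ^ n := by
      calc (2 : ℝ) ^ n * ‖perm V‖
          = ‖(2 : ℂ) ^ n * perm V‖ := by
            rw [norm_mul, norm_pow]; norm_num
        _ = ‖∑ δ : Fin n → Bool,
              (∏ i, sg (δ i)) * ∏ i, ∑ j, V i j * sg (δ j)‖ := by rw [hg]
        _ ≤ ∑ δ : Fin n → Bool,
              ‖(∏ i, sg (δ i)) * ∏ i, ∑ j, V i j * sg (δ j)‖ := by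
            exact norm_sum_le _ _
        _ ≤ ∑ _δ : Fin n → Bool, opNorm V ^ n := by
            refine Finset.sum_le_sum fun δ _ => ?_
            rw [norm_mul]
            have h1 : ‖∏ i, sg (δ i)‖ = 1 := by
              rw [norm_prod]
              simp [abs_sg]
            rw [h1, one_mul, norm_prod]
            exact row_prod_le hn V (fun j => sg (δ j)) (fun j => abs_sg (δ j))
        _ = 2 ^ n * opNorm V ^ n := by
            rw [Finset.sum_const, Finset.card_univ]
            simp [Fintype.card_fun, nsmul_eq_mul]
    have h2 : (0 : ℝ) < 2 ^ n := by positivity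
    exact le_of_mul_le_mul_left habs h2
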